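/- Let a < b and c < d be real numbers, Δ = [a,b] × [c,d], and let f : Δ → ℝ be coordinated convex on Δ and integrable on Δ. Then f((a+b)/2, (c+d)/2) ≤ (1/((b-a)(d-c))) ∫_a^b ∫_c^d f(x,y) dy dx ≤ (f(a,c) + f(a,d) + f(b,c) + f(b,d))/4. -/

import Mathlib

open MeasureTheory Set intervalIntegral

/-- A real-valued convex function on a nontrivial compact interval is integrable there. -/
lemma convexOn_integrableOn_Icc {g : ℝ → ℝ} {c d : ℝ} (hcd : c < d)
    (hg : ConvexOn ℝ (Icc c d) g) : IntegrableOn g (Icc c d) := by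
  rw [integrableOn_Icc_iff_integrableOn_Ioo]
  have hc : c ∈ Icc c d := left_mem_Icc.2 hcd.le
  have hd : d ∈ Icc c d := right_mem_Icc.2 hcd.le
  set M := max (g c) (g d) with hM
  have hub : ∀ x ∈ Icc c d, g x ≤ M := by
    intro x hx
    exact hg.le_on_segment hc hd ((segment_eq_Icc hcd.le).symm ▸ hx)
  have hm : (c + d) / 2 ∈ Icc c d := ⟨by linarith, by linarith⟩
  have hlb : ∀ x ∈ Icc c d, 2 * g ((c + d) / 2) - M ≤ g x := by
    intro x hx
    have hx' : c + d - x ∈ Icc c d := ⟨by linarith [hx.2], by linarith [hx.1]⟩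
    have h := hg.2 hx hx' (by norm_num : (0:ℝ) ≤ 1/2) (by norm_num : (0:ℝ) ≤ 1/2)
      (by norm_num)
    have h2 : (1/2 : ℝ) • x + (1/2 : ℝ) • (c + d - x) = (c + d) / 2 := by
      simp only [smul_eq_mul]; ring
    rw [h2] at h
    have h3 := hub _ hx'
    simp only [smul_eq_mul] at h
    linarith
  set K := max |M| |2 * g ((c + d) / 2) - M| with hK
  have hbd : ∀ x ∈ Icc c d, ‖g x‖ ≤ K := by
    intro x hx
    rw [Real.norm_eq_abs, abs_le]
    constructor
    · have := hlb x hx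
      have h1 : -|2 * g ((c + d) / 2) - M| ≤ 2 * g ((c + d) / 2) - M := neg_abs_le _
      have h2 : |2 * g ((c + d) / 2) - M| ≤ K := le_max_right _ _
      linarith
    · have := hub x hx
      have h1 : M ≤ |M| := le_abs_self _
      have h2 : |M| ≤ K := le_max_left _ _
      linarith
  have hmeas : AEStronglyMeasurable g (volume.restrict (Ioo c d)) := by
    have := hg.continuousOn_interior
    rw [interior_Icc] at this
    exact this.aestronglyMeasurable measurableSet_Ioo
  have hKint : IntegrableOn (fun _ : ℝ => K) (Ioo c d) volume :=
    integrableOn_const measure_Ioo_lt_top.ne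
  refine hKint.mono' hmeas ?_
  refine (ae_restrict_iff' measurableSet_Ioo).2 (Filter.Eventually.of_forall ?_)
  exact fun x hx => hbd x (Ioo_subset_Icc_self hx)

lemma convexOn_intervalIntegrable {g : ℝ → ℝ} {c d : ℝ} (hcd : c < d)
    (hg : ConvexOn ℝ (Icc c d) g) : IntervalIntegrable g volume c d :=
  (intervalIntegrable_iff_integrableOn_Icc_of_le hcd.le).2 (convexOn_integrableOn_Icc hcd hg)

/-- Hermite–Hadamard, right inequality, 1D. -/
lemma hh_right {g : ℝ → ℝ} {c d : ℝ} (hcd : c < d) (hg : ConvexOn ℝ (Icc c d) g) :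
    ∫ y in c..d, g y ≤ (g c + g d) / 2 * (d - c) := by
  have hI := convexOn_intervalIntegrable hcd hg
  have hc : c ∈ Icc c d := left_mem_Icc.2 hcd.le
  have hd : d ∈ Icc c d := right_mem_Icc.2 hcd.le
  have hdc : (0:ℝ) < d - c := by linarith
  have hpt : ∀ y ∈ Icc c d, g y ≤ (g d - g c) / (d - c) * y + (d * g c - c * g d) / (d - c) := by
    intro y hy
    have h1 : (0:ℝ) ≤ (d - y) / (d - c) := div_nonneg (by linarith [hy.2]) hdc.le
    have h2 : (0:ℝ) ≤ (y - c) / (d - c) := div_nonneg (by linarith [hy.1]) hdc.le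
    have h3 : (d - y) / (d - c) + (y - c) / (d - c) = 1 := by field_simp; ring
    have h := hg.2 hc hd h1 h2 h3
    have he : ((d - y) / (d - c)) • c + ((y - c) / (d - c)) • d = y := by
      simp only [smul_eq_mul]; field_simp; ring
    rw [he] at h
    simp only [smul_eq_mul] at h
    calc g y ≤ (d - y) / (d - c) * g c + (y - c) / (d - c) * g d := h
      _ = (g d - g c) / (d - c) * y + (d * g c - c * g d) / (d - c) := by field_simp; ring
  have hlin : IntervalIntegrable (fun y : ℝ => (g d - g c) / (d - c) * y) volume c d :=
    (continuous_const.mul continuous_id').intervalIntegrable c d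
  have hcont : IntervalIntegrable
      (fun y : ℝ => (g d - g c) / (d - c) * y + (d * g c - c * g d) / (d - c)) volume c d :=
    hlin.add intervalIntegrable_const
  calc ∫ y in c..d, g y
      ≤ ∫ y in c..d, ((g d - g c) / (d - c) * y + (d * g c - c * g d) / (d - c)) :=
        integral_mono_on hcd.le hI hcont hpt
    _ = (g d - g c) / (d - c) * ((d ^ 2 - c ^ 2) / 2) + (d * g c - c * g d) / (d - c) * (d - c) := by
        rw [intervalIntegral.integral_add hlin intervalIntegrable_const,
          intervalIntegral.integral_const_mul, integral_id, intervalIntegral.integral_const]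
        simp [smul_eq_mul, mul_comm]
    _ = (g c + g d) / 2 * (d - c) := by field_simp; ring
  
/-- Hermite–Hadamard, left inequality, 1D. -/
lemma hh_left {g : ℝ → ℝ} {c d : ℝ} (hcd : c < d) (hg : ConvexOn ℝ (Icc c d) g) :
    (d - c) * g ((c + d) / 2) ≤ ∫ y in c..d, g y := by
  have hI := convexOn_intervalIntegrable hcd hg
  have hI' : IntervalIntegrable (fun y => g (c + d - y)) volume c d := by
    simpa using (hI.comp_sub_left (c + d)).symm
  have hpt : ∀ y ∈ Icc c d, g ((c + d) / 2) ≤ (g y + g (c + d - y)) / 2 := by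
    intro y hy
    have hy' : c + d - y ∈ Icc c d := ⟨by linarith [hy.2], by linarith [hy.1]⟩
    have h := hg.2 hy hy' (by norm_num : (0:ℝ) ≤ 1/2) (by norm_num : (0:ℝ) ≤ 1/2) (by norm_num)
    have h2 : (1/2 : ℝ) • y + (1/2 : ℝ) • (c + d - y) = (c + d) / 2 := by
      simp only [smul_eq_mul]; ring
    rw [h2] at h
    simp only [smul_eq_mul] at h
    linarith
  have hrefl : (∫ y in c..d, g (c + d - y)) = ∫ y in c..d, g y := by
    rw [integral_comp_sub_left g (c + d)]
    norm_num
  calc (d - c) * g ((c + d) / 2) = ∫ _ in c..d, g ((c + d) / 2) := by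
        rw [intervalIntegral.integral_const, smul_eq_mul]
    _ ≤ ∫ y in c..d, (g y + g (c + d - y)) / 2 :=
        integral_mono_on hcd.le intervalIntegrable_const
          (((hI.add hI').div_const 2)) hpt
    _ = ((∫ y in c..d, g y) + ∫ y in c..d, g (c + d - y)) / 2 := by
        rw [intervalIntegral.integral_div, intervalIntegral.integral_add hI hI']
    _ = ∫ y in c..d, g y := by rw [hrefl]; ring

/-- **Hermite–Hadamard inequality for coordinated convex functions** (Theorem 3,
inequality (2.1)): if `f` is coordinated convex and integrable on
`[a,b] × [c,d]`, then
`f((a+b)/2, (c+d)/2) ≤ (1/((b-a)(d-c))) ∫∫ f ≤ (f(a,c)+f(a,d)+f(b,c)+f(b,d))/4`. -/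
theorem hadamard_coordinated_convex
    (a b c d : ℝ) (hab : a < b) (hcd : c < d) (f : ℝ → ℝ → ℝ)
    (hconv : ∀ t ∈ Icc (0:ℝ) 1, ∀ s ∈ Icc (0:ℝ) 1,
      ∀ x ∈ Icc a b, ∀ y ∈ Icc a b, ∀ u ∈ Icc c d, ∀ w ∈ Icc c d,
        f (t * x + (1 - t) * y) (s * u + (1 - s) * w) ≤
          t * s * f x u + s * (1 - t) * f y u + t * (1 - s) * f x w
            + (1 - t) * (1 - s) * f y w)
    (hint : IntegrableOn (fun p : ℝ × ℝ => f p.1 p.2) (Icc a b ×ˢ Icc c d)) :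
    f ((a + b) / 2) ((c + d) / 2) ≤
        (1 / ((b - a) * (d - c))) * ∫ x in a..b, ∫ y in c..d, f x y ∧
      (1 / ((b - a) * (d - c))) * ∫ x in a..b, ∫ y in c..d, f x y ≤
        (f a c + f a d + f b c + f b d) / 4 := by
  have hba : (0:ℝ) < b - a := by linarith
  have hdc : (0:ℝ) < d - c := by linarith
  -- convexity of the slices
  have hconv_x : ∀ y ∈ Icc c d, ConvexOn ℝ (Icc a b) (fun x => f x y) := by
    intro y hy
    refine ⟨convex_Icc a b, fun x hx x' hx' p q hp hq hpq => ?_⟩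
    have hp1 : p ∈ Icc (0:ℝ) 1 := ⟨hp, by linarith⟩
    have h1 : (1:ℝ) ∈ Icc (0:ℝ) 1 := ⟨zero_le_one, le_refl 1⟩
    have h := hconv p hp1 1 h1 x hx x' hx' y hy y hy
    have hq' : q = 1 - p := by linarith
    simp only [smul_eq_mul]
    rw [hq']
    simpa using h
  have hconv_y : ∀ x ∈ Icc a b, ConvexOn ℝ (Icc c d) (fun y => f x y) := by
    intro x hx
    refine ⟨convex_Icc c d, fun u hu w hw p q hp hq hpq => ?_⟩
    have hp1 : p ∈ Icc (0:ℝ) 1 := ⟨hp, by linarith⟩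
    have h1 : (1:ℝ) ∈ Icc (0:ℝ) 1 := ⟨zero_le_one, le_refl 1⟩
    have h := hconv 1 h1 p hp1 x hx x hx u hu w hw
    have hq' : q = 1 - p := by linarith
    simp only [smul_eq_mul]
    rw [hq']
    simpa using h
  have ha : a ∈ Icc a b := left_mem_Icc.2 hab.le
  have hb : b ∈ Icc a b := right_mem_Icc.2 hab.le
  have hc : c ∈ Icc c d := left_mem_Icc.2 hcd.le
  have hd : d ∈ Icc c d := right_mem_Icc.2 hcd.le
  have hmx : (a + b) / 2 ∈ Icc a b := ⟨by linarith, by linarith⟩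
  have hmy : (c + d) / 2 ∈ Icc c d := ⟨by linarith, by linarith⟩
  -- Fubini: integrability of G x = ∫ y in c..d, f x y
  have hG : IntegrableOn (fun x => ∫ y in c..d, f x y) (Icc a b) := by
    have h1 : Integrable (fun p : ℝ × ℝ => f p.1 p.2)
        ((volume.restrict (Icc a b)).prod (volume.restrict (Icc c d))) := by
      rwa [Measure.prod_restrict, ← Measure.volume_eq_prod]
    have h2 := h1.integral_prod_left
    have heq : (fun x => ∫ y in c..d, f x y)
        = fun x => ∫ y, f x y ∂(volume.restrict (Icc c d)) := by
      funext x
      rw [intervalIntegral.integral_of_le hcd.le, ← integral_Icc_eq_integral_Ioc]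
    rw [heq]
    exact h2
  have hGI : IntervalIntegrable (fun x => ∫ y in c..d, f x y) volume a b :=
    (intervalIntegrable_iff_integrableOn_Icc_of_le hab.le).2 hG
  -- the three helper interval integrabilities
  have hIc : IntervalIntegrable (fun x => f x c) volume a b :=
    convexOn_intervalIntegrable hab (hconv_x c hc)
  have hId : IntervalIntegrable (fun x => f x d) volume a b :=
    convexOn_intervalIntegrable hab (hconv_x d hd)
  have hImy : IntervalIntegrable (fun x => f x ((c + d) / 2)) volume a b :=
    convexOn_intervalIntegrable hab (hconv_x _ hmy)
  constructor
  · -- left inequality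
    rw [one_div, inv_mul_eq_div, le_div_iff₀ (by positivity : (0:ℝ) < (b - a) * (d - c))]
    have step1 : (b - a) * f ((a + b) / 2) ((c + d) / 2)
        ≤ ∫ x in a..b, f x ((c + d) / 2) := hh_left hab (hconv_x _ hmy)
    have step2 : (d - c) * ∫ x in a..b, f x ((c + d) / 2) ≤ ∫ x in a..b, ∫ y in c..d, f x y := by
      have hmono : ∀ x ∈ Icc a b, (d - c) * f x ((c + d) / 2) ≤ ∫ y in c..d, f x y :=
        fun x hx => hh_left hcd (hconv_y x hx)
      calc (d - c) * ∫ x in a..b, f x ((c + d) / 2)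
          = ∫ x in a..b, (d - c) * f x ((c + d) / 2) := by rw [intervalIntegral.integral_const_mul]
        _ ≤ ∫ x in a..b, ∫ y in c..d, f x y :=
            integral_mono_on hab.le (hImy.const_mul _) hGI hmono
    nlinarith [step1, step2, hdc, hba]
  · -- right inequality
    rw [one_div, inv_mul_eq_div, div_le_iff₀ (by positivity : (0:ℝ) < (b - a) * (d - c))]
    have step1 : ∫ x in a..b, ∫ y in c..d, f x y
        ≤ ∫ x in a..b, (f x c + f x d) / 2 * (d - c) := by
      refine integral_mono_on hab.le hGI (((hIc.add hId).div_const 2).mul_const _) ?_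
      exact fun x hx => hh_right hcd (hconv_y x hx)
    have e1 : ∫ x in a..b, (f x c + f x d) / 2 * (d - c)
        = ((∫ x in a..b, f x c) + ∫ x in a..b, f x d) / 2 * (d - c) := by
      rw [intervalIntegral.integral_mul_const, intervalIntegral.integral_div,
        intervalIntegral.integral_add hIc hId]
    have step2 : ∫ x in a..b, f x c ≤ (f a c + f b c) / 2 * (b - a) :=
      hh_right hab (hconv_x c hc)
    have step3 : ∫ x in a..b, f x d ≤ (f a d + f b d) / 2 * (b - a) :=
      hh_right hab (hconv_x d hd)
    rw [e1] at step1
    nlinarith [step1, step2, step3, hdc, hba]
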